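/- Let N ≥ 1 and let A be a subset of ℝ^N equipped with the Chebyshev distance d^N(x,y) = max_{n=1,…,N} |x_n − y_n|. If A is bounded, then there exists a map K from A into the Gromov–Hausdorff space (the space of isometry classes of nonempty compact metric spaces with the Gromov–Hausdorff distance d_GH) such that d_GH(K(x), K(y)) = d^N(x, y) for all x, y ∈ A; i.e., A embeds isometrically into the Gromov–Hausdorff space. -/

import Mathlib

open GromovHausdorff Metric Set

namespace ChebGH

variable (N : ℕ) (C : ℝ)

noncomputable def Q : ℝ := max C 0
noncomputable def S : ℝ := 9 * Q C + 1
noncomputable def L : ℝ := S C * (N + N * N) + 6 * Q C + 1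

lemma Q_nonneg : 0 ≤ Q C := le_max_right _ _
lemma S_pos : 1 ≤ S C := by have := Q_nonneg C; unfold S; linarith
lemma L_lb : S C * (N + N * N) + 6 * Q C + 1 ≤ L N C := le_refl _

noncomputable def cl (t : ℝ) : ℝ := max (-(Q C)) (min (Q C) t)

lemma abs_cl_le (t : ℝ) : |cl C t| ≤ Q C := by
  have h := Q_nonneg C
  rw [abs_le]
  constructor
  · exact le_max_left _ _
  · exact max_le (by linarith) (min_le_left _ _)

lemma cl_eq_self {t : ℝ} (h0 : 0 ≤ C) (h : |t| ≤ C) : cl C t = t := by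
  have hQ : Q C = C := max_eq_left h0
  rw [abs_le] at h
  unfold cl
  rw [hQ, min_eq_right h.2, max_eq_right h.1]

lemma cl_lip (s t : ℝ) : |cl C s - cl C t| ≤ |s - t| := by
  have h1 : |min (Q C) s - min (Q C) t| ≤ |s - t| := by
    rw [abs_sub_comm, abs_le]
    rcases le_total (Q C) s with hs | hs <;> rcases le_total (Q C) t with ht | ht <;>
      simp [min_eq_left, min_eq_right, hs, ht, abs_le] <;>
      cases abs_le.1 (le_refl |s - t|) <;> constructor <;>
      · rw [abs_sub_comm] at * <;> nlinarith [le_abs_self (t - s), neg_abs_le (t - s), le_abs_self (s-t), neg_abs_le (s-t)]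
  calc |cl C s - cl C t| ≤ |min (Q C) s - min (Q C) t| := by
        unfold cl
        rcases le_total (-(Q C)) (min (Q C) s) with hs | hs <;>
          rcases le_total (-(Q C)) (min (Q C) t) with ht | ht <;>
          simp [max_eq_left, max_eq_right, hs, ht] <;> rw [abs_le] <;> constructor <;>
          nlinarith [le_abs_self (min (Q C) s - min (Q C) t), neg_abs_le (min (Q C) s - min (Q C) t)]
    _ ≤ |s - t| := h1

/-- base multiplier encoding the pair of points -/
def bE : Option (Fin N) → Option (Fin N) → ℕ
  | none, none => 0
  | none, some i => i
  | some i, none => i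
  | some i, some j => N + min (i : ℕ) (j : ℕ) + N * max (i : ℕ) (j : ℕ)

noncomputable def pv (v : Fin N → ℝ) : Option (Fin N) → Option (Fin N) → ℝ
  | none, some i => 2 * cl C (v i)
  | some i, none => 2 * cl C (v i)
  | _, _ => 0

noncomputable def dd (v : Fin N → ℝ) (a b : Option (Fin N)) : ℝ :=
  if a = b then 0 else L N C + S C * bE N a b + pv N C v a b

lemma bE_comm (a b : Option (Fin N)) : bE N a b = bE N b a := by
  cases a <;> cases b <;> simp [bE, Nat.min_comm, Nat.max_comm]

lemma pv_comm (v : Fin N → ℝ) (a b : Option (Fin N)) : pv N C v a b = pv N C v b a := by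
  cases a <;> cases b <;> simp [pv]

lemma abs_pv_le (v : Fin N → ℝ) (a b : Option (Fin N)) : |pv N C v a b| ≤ 2 * Q C := by
  have h := Q_nonneg C
  cases a <;> cases b <;> simp only [pv]
  · simpa using h
  · rename_i i
    rw [abs_mul]
    have := abs_cl_le C (v i)
    rw [abs_of_nonneg (by norm_num : (0:ℝ) ≤ 2)]
    linarith
  · rename_i i
    rw [abs_mul]
    have := abs_cl_le C (v i)
    rw [abs_of_nonneg (by norm_num : (0:ℝ) ≤ 2)]
    linarith
  · simpa using h

lemma bE_le (a b : Option (Fin N)) : (bE N a b : ℝ) ≤ (N : ℝ) + N * N := by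
  have : bE N a b ≤ N + N * N := by
    cases a <;> cases b <;> simp [bE]
    · omega
    · omega
    · rename_i i j
      have h1 : min (i : ℕ) (j : ℕ) ≤ i := Nat.min_le_left _ _
      have h2 : max (i : ℕ) (j : ℕ) < N := by
        rcases max_choice (i : ℕ) (j : ℕ) with h | h <;> rw [h] <;> omega
      have h3 : (i : ℕ) < N := i.isLt
      nlinarith
  calc (bE N a b : ℝ) ≤ ((N + N * N : ℕ) : ℝ) := by exact_mod_cast this
    _ = (N : ℝ) + N * N := by push_cast; ring

lemma dd_self (v : Fin N → ℝ) (a : Option (Fin N)) : dd N C v a a = 0 := by simp [dd]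

lemma dd_comm (v : Fin N → ℝ) (a b : Option (Fin N)) : dd N C v a b = dd N C v b a := by
  rcases eq_or_ne a b with rfl | h
  · rfl
  · unfold dd
    rw [if_neg h, if_neg (Ne.symm h), bE_comm, pv_comm]

lemma dd_lb (v : Fin N → ℝ) {a b : Option (Fin N)} (h : a ≠ b) :
    L N C - 2 * Q C ≤ dd N C v a b := by
  have h1 := abs_pv_le N C v a b
  have h2 : (0:ℝ) ≤ S C * bE N a b :=
    mul_nonneg (by linarith [S_pos C]) (Nat.cast_nonneg _)
  rw [abs_le] at h1
  simp only [dd, if_neg h]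
  linarith

lemma dd_ub (v : Fin N → ℝ) (a b : Option (Fin N)) :
    dd N C v a b ≤ L N C + S C * ((N:ℝ) + N * N) + 2 * Q C := by
  have h1 := abs_pv_le N C v a b
  rw [abs_le] at h1
  have h2 : S C * (bE N a b : ℝ) ≤ S C * ((N:ℝ) + N * N) :=
    mul_le_mul_of_nonneg_left (bE_le N a b) (by linarith [S_pos C])
  have hS : (0:ℝ) ≤ S C := le_trans zero_le_one (S_pos C)
  have hN : (0:ℝ) ≤ (N:ℝ) + N * N := by positivity
  have h3 : (0:ℝ) ≤ S C * ((N:ℝ) + N * N) := mul_nonneg hS hN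
  have hL : 0 ≤ L N C := by
    have := Q_nonneg C
    unfold L; nlinarith
  unfold dd
  split
  · have := Q_nonneg C
    linarith
  · linarith

lemma dd_nonneg (v : Fin N → ℝ) (a b : Option (Fin N)) : 0 ≤ dd N C v a b := by
  rcases eq_or_ne a b with rfl | h
  · simp [dd_self]
  · have := dd_lb N C v h
    have hS : (0:ℝ) ≤ S C := le_trans zero_le_one (S_pos C)
    have hN : (0:ℝ) ≤ (N:ℝ) + N * N := by positivity
    have h3 : (0:ℝ) ≤ S C * ((N:ℝ) + N * N) := mul_nonneg hS hN
    have hQ := Q_nonneg C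
    unfold L at this
    linarith

lemma dd_triangle (v : Fin N → ℝ) (a b c : Option (Fin N)) :
    dd N C v a b ≤ dd N C v a c + dd N C v c b := by
  rcases eq_or_ne a b with rfl | hab
  · rw [dd_self]; exact add_nonneg (dd_nonneg N C v _ _) (dd_nonneg N C v _ _)
  rcases eq_or_ne c a with rfl | hca
  · rw [dd_self]; linarith [dd_nonneg N C v c c]
  rcases eq_or_ne c b with rfl | hcb
  · rw [dd_self]
    linarith [dd_comm N C v a c]
  have h1 := dd_ub N C v a b
  have h2 := dd_lb N C v (Ne.symm hca)
  have h3 := dd_lb N C v hcb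
  have hS : (0:ℝ) ≤ S C := le_trans zero_le_one (S_pos C)
  have hN : (0:ℝ) ≤ (N:ℝ) + N * N := by positivity
  have h3 : (0:ℝ) ≤ S C * ((N:ℝ) + N * N) := mul_nonneg hS hN
  have hQ := Q_nonneg C
  unfold L at *
  linarith

lemma dd_eq (v : Fin N → ℝ) {a b : Option (Fin N)} (h : a ≠ b) :
    dd N C v a b = L N C + S C * bE N a b + pv N C v a b := if_neg h

end ChebGH

namespace ChebGH

/-- the finite metric space encoding the vector `v` -/
def Sp (N : ℕ) (C : ℝ) (v : Fin N → ℝ) : Type := Option (Fin N)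

instance (N : ℕ) (C : ℝ) (v : Fin N → ℝ) : Nonempty (Sp N C v) := ⟨(none : Option (Fin N))⟩
instance (N : ℕ) (C : ℝ) (v : Fin N → ℝ) : Finite (Sp N C v) :=
  inferInstanceAs (Finite (Option (Fin N)))
instance (N : ℕ) (C : ℝ) (v : Fin N → ℝ) : Fintype (Sp N C v) :=
  inferInstanceAs (Fintype (Option (Fin N)))

noncomputable instance SpMetric (N : ℕ) (C : ℝ) (v : Fin N → ℝ) : MetricSpace (Sp N C v) where
  dist a b := dd N C v a b
  dist_self a := dd_self N C v a
  dist_comm a b := dd_comm N C v a b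
  dist_triangle a b c := dd_triangle N C v a c b
  eq_of_dist_eq_zero := by
    intro a b h
    by_contra hab
    have h1 := dd_lb N C v hab
    have h' : dd N C v a b = 0 := h
    have hS : (0:ℝ) ≤ S C := le_trans zero_le_one (S_pos C)
    have hN : (0:ℝ) ≤ (N:ℝ) + N * N := by positivity
    have h3 : (0:ℝ) ≤ S C * ((N:ℝ) + N * N) := mul_nonneg hS hN
    have hQ := Q_nonneg C
    rw [h'] at h1
    unfold L at h1
    linarith

lemma Sp_dist (N : ℕ) (C : ℝ) (v : Fin N → ℝ) (a b : Sp N C v) :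
    dist a b = dd N C v a b := rfl

instance (N : ℕ) (C : ℝ) (v : Fin N → ℝ) : CompactSpace (Sp N C v) :=
  Finite.compactSpace

/-- glue space -/
def Gl (N : ℕ) (C : ℝ) (v w : Fin N → ℝ) (r : ℝ) : Type :=
  Option (Fin N) ⊕ Option (Fin N)

noncomputable def FF (N : ℕ) (C : ℝ) (v w : Fin N → ℝ) (a b : Option (Fin N)) : ℝ :=
  (Finset.univ : Finset (Option (Fin N))).inf' ⟨none, Finset.mem_univ _⟩
    (fun c => dd N C v a c + dd N C w c b)

def inL (N : ℕ) (C : ℝ) (v w : Fin N → ℝ) (r : ℝ) : Option (Fin N) → Gl N C v w r :=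
  Sum.inl

def inR (N : ℕ) (C : ℝ) (v w : Fin N → ℝ) (r : ℝ) : Option (Fin N) → Gl N C v w r :=
  Sum.inr

noncomputable def DD (N : ℕ) (C : ℝ) (v w : Fin N → ℝ) (r : ℝ) :
    Gl N C v w r → Gl N C v w r → ℝ
  | Sum.inl a, Sum.inl b => dd N C v a b
  | Sum.inr a, Sum.inr b => dd N C w a b
  | Sum.inl a, Sum.inr b => r + FF N C v w a b
  | Sum.inr a, Sum.inl b => r + FF N C v w b a

section glue

variable {N : ℕ} {C : ℝ} {v w : Fin N → ℝ} {r : ℝ}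
variable (hr : 0 < r) (hvw : ∀ a b, |dd N C v a b - dd N C w a b| ≤ 2 * r)

lemma FF_nonneg (a b : Option (Fin N)) : 0 ≤ FF N C v w a b := by
  apply Finset.le_inf'
  intro c _
  exact add_nonneg (dd_nonneg N C v a c) (dd_nonneg N C w c b)

lemma FF_le (a b c : Option (Fin N)) : FF N C v w a b ≤ dd N C v a c + dd N C w c b :=
  Finset.inf'_le _ (Finset.mem_univ c)

lemma FF_min (a b : Option (Fin N)) :
    ∃ c, FF N C v w a b = dd N C v a c + dd N C w c b := by
  obtain ⟨c, _, hc⟩ := Finset.exists_mem_eq_inf' (⟨none, Finset.mem_univ _⟩ :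
    (Finset.univ : Finset (Option (Fin N))).Nonempty)
    (fun c => dd N C v a c + dd N C w c b)
  exact ⟨c, hc⟩

include hvw in
lemma DD_triangle (p q s : Gl N C v w r) :
    DD N C v w r p q ≤ DD N C v w r p s + DD N C v w r s q := by
  have key : ∀ a b : Option (Fin N), dd N C w a b - 2*r ≤ dd N C v a b ∧
      dd N C v a b - 2*r ≤ dd N C w a b := by
    intro a b
    have := hvw a b
    rw [abs_le] at this
    constructor <;> linarith [this.1, this.2]
  rcases p with a | a <;> rcases q with b | b <;> rcases s with c | c <;>
    simp only [DD]
  · exact dd_triangle N C v a b c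
  · -- inl a, inl b, inr c : dv a b ≤ (r + F a c) + (r + F b c)
    obtain ⟨e, he⟩ := FF_min (C := C) (v := v) (w := w) a c
    obtain ⟨e', he'⟩ := FF_min (C := C) (v := v) (w := w) b c
    have h1 : dd N C v e e' ≤ dd N C w e c + dd N C w c e' + 2*r := by
      have h2 := dd_triangle N C w e e' c
      have h3 := hvw e e'
      rw [abs_le] at h3
      linarith [h3.2]
    have h4 := dd_triangle N C v a b e
    have h5 := dd_triangle N C v e b e'
    rw [he, he']
    have hcomm := dd_comm N C v e' b
    have hcomm2 := dd_comm N C w c e'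
    linarith
  · -- inl a, inr b, inl c : r + F a b ≤ dv a c + (r + F c b)
    obtain ⟨e, he⟩ := FF_min (C := C) (v := v) (w := w) c b
    have h1 : FF N C v w a b ≤ dd N C v a e + dd N C w e b := FF_le a b e
    have h2 := dd_triangle N C v a e c
    have hcomm := dd_comm N C v c e
    rw [he]
    linarith
  · -- inl a, inr b, inr c : r + F a b ≤ (r + F a c) + dw c b
    obtain ⟨e, he⟩ := FF_min (C := C) (v := v) (w := w) a c
    have h1 : FF N C v w a b ≤ dd N C v a e + dd N C w e b := FF_le a b e
    have h2 := dd_triangle N C w e b c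
    have hcomm := dd_comm N C w c b
    rw [he]
    linarith
  · -- inr a, inl b, inl c : r + F b a ≤ (r + F c a) + dv c b
    obtain ⟨e, he⟩ := FF_min (C := C) (v := v) (w := w) c a
    have h1 : FF N C v w b a ≤ dd N C v b e + dd N C w e a := FF_le b a e
    have h2 := dd_triangle N C v b e c
    have hcomm := dd_comm N C v b c
    rw [he]
    linarith
  · -- inr a, inl b, inr c : r + F b a ≤ dw a c + (r + F b c)
    obtain ⟨e, he⟩ := FF_min (C := C) (v := v) (w := w) b c
    have h1 : FF N C v w b a ≤ dd N C v b e + dd N C w e a := FF_le b a e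
    have h2 := dd_triangle N C w e a c
    have hcomm := dd_comm N C w c a
    rw [he]
    linarith
  · -- inr a, inr b, inl c : dw a b ≤ (r + F c a) + (r + F c b)
    obtain ⟨e, he⟩ := FF_min (C := C) (v := v) (w := w) c a
    obtain ⟨e', he'⟩ := FF_min (C := C) (v := v) (w := w) c b
    have h1 : dd N C w e e' ≤ dd N C v e c + dd N C v c e' + 2*r := by
      have h2 := dd_triangle N C v e e' c
      have h3 := hvw e e'
      rw [abs_le] at h3
      linarith [h3.1]
    have h4 := dd_triangle N C w a e' e
    have h5 := dd_triangle N C w a b e'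
    have hc1 := dd_comm N C w e a
    have hc2 := dd_comm N C v e c
    rw [he, he']
    linarith
  · exact dd_triangle N C w a b c

end glue

end ChebGH

namespace ChebGH

section glue2

variable {N : ℕ} {C : ℝ} {v w : Fin N → ℝ} {r : ℝ}

noncomputable def GlMetric (hr : 0 < r)
    (hvw : ∀ a b, |dd N C v a b - dd N C w a b| ≤ 2 * r) :
    MetricSpace (Gl N C v w r) where
  dist := DD N C v w r
  dist_self p := by rcases p with a | a <;> simp [DD, dd_self]
  dist_comm p q := by
    rcases p with a | a <;> rcases q with b | b <;> simp only [DD]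
    · exact dd_comm N C v a b
    · exact dd_comm N C w a b
  dist_triangle p q s := DD_triangle hvw p s q
  eq_of_dist_eq_zero := by
    intro p q h
    rcases p with a | a <;> rcases q with b | b
    · have h' : dd N C v a b = 0 := h
      by_contra hab
      have hab' : a ≠ b := fun hh => hab (by rw [hh])
      have h1 := dd_lb N C v hab'
      have hS : (0:ℝ) ≤ S C := le_trans zero_le_one (S_pos C)
      have hN : (0:ℝ) ≤ (N:ℝ) + N * N := by positivity
      have h3 : (0:ℝ) ≤ S C * ((N:ℝ) + N * N) := mul_nonneg hS hN
      have hQ := Q_nonneg C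
      rw [h'] at h1
      unfold L at h1
      linarith
    · exfalso
      have h' : r + FF N C v w a b = 0 := h
      have := FF_nonneg (C := C) (v := v) (w := w) a b
      linarith
    · exfalso
      have h' : r + FF N C v w b a = 0 := h
      have := FF_nonneg (C := C) (v := v) (w := w) b a
      linarith
    · have h' : dd N C w a b = 0 := h
      by_contra hab
      have hab' : a ≠ b := fun hh => hab (by rw [hh])
      have h1 := dd_lb N C w hab'
      have hS : (0:ℝ) ≤ S C := le_trans zero_le_one (S_pos C)
      have hN : (0:ℝ) ≤ (N:ℝ) + N * N := by positivity
      have h3 : (0:ℝ) ≤ S C * ((N:ℝ) + N * N) := mul_nonneg hS hN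
      have hQ := Q_nonneg C
      rw [h'] at h1
      unfold L at h1
      linarith

end glue2

/-- Upper bound: the GH distance is at most `r`. -/
lemma ghDist_le (N : ℕ) (C : ℝ) (v w : Fin N → ℝ) (r : ℝ) (hr : 0 < r)
    (hvw : ∀ i, |cl C (v i) - cl C (w i)| ≤ r) :
    ghDist (Sp N C v) (Sp N C w) ≤ r := by
  have hdd : ∀ a b, |dd N C v a b - dd N C w a b| ≤ 2 * r := by
    intro a b
    rcases eq_or_ne a b with rfl | hab
    · simp [dd_self]; linarith
    · rw [dd_eq N C v hab, dd_eq N C w hab]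
      have : L N C + S C * bE N a b + pv N C v a b - (L N C + S C * bE N a b + pv N C w a b)
          = pv N C v a b - pv N C w a b := by ring
      rw [this]
      cases a <;> cases b <;> simp only [pv]
      · simp; linarith
      · rename_i i
        have := hvw i
        rw [show (2 : ℝ) * cl C (v i) - 2 * cl C (w i) = 2 * (cl C (v i) - cl C (w i)) by ring,
          abs_mul, abs_of_nonneg (by norm_num : (0:ℝ) ≤ 2)]
        linarith
      · rename_i i
        have := hvw i
        rw [show (2 : ℝ) * cl C (v i) - 2 * cl C (w i) = 2 * (cl C (v i) - cl C (w i)) by ring,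
          abs_mul, abs_of_nonneg (by norm_num : (0:ℝ) ≤ 2)]
        linarith
      · simp; linarith
  letI : MetricSpace (Gl N C v w r) := GlMetric hr hdd
  have distl : ∀ a b : Option (Fin N),
      dist (inL N C v w r a) (inL N C v w r b) = dd N C v a b := fun _ _ => rfl
  have distr : ∀ a b : Option (Fin N),
      dist (inR N C v w r a) (inR N C v w r b) = dd N C w a b := fun _ _ => rfl
  have il : Isometry (fun a : Sp N C v => inL N C v w r a) := by
    apply Isometry.of_dist_eq
    intro a b
    rw [distl a b, Sp_dist]
  have ir : Isometry (fun a : Sp N C w => inR N C v w r a) := by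
    apply Isometry.of_dist_eq
    intro a b
    rw [distr a b, Sp_dist]
  refine le_trans (ghDist_le_hausdorffDist il ir) ?_
  apply hausdorffDist_le_of_mem_dist hr.le
  · rintro x ⟨a, rfl⟩
    refine ⟨inR N C v w r a, ⟨a, rfl⟩, ?_⟩
    have hh : dist (inL N C v w r a) (inR N C v w r a) = r + FF N C v w a a := rfl
    rw [hh]
    have h1 : FF N C v w a a ≤ dd N C v a a + dd N C w a a := FF_le a a a
    have e1 := dd_self N C v a; have e2 := dd_self N C w a
    linarith
  · rintro x ⟨a, rfl⟩
    refine ⟨inL N C v w r a, ⟨a, rfl⟩, ?_⟩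
    have hh : dist (inR N C v w r a) (inL N C v w r a) = r + FF N C v w a a := rfl
    rw [hh]
    have h1 : FF N C v w a a ≤ dd N C v a a + dd N C w a a := FF_le a a a
    have e1 := dd_self N C v a; have e2 := dd_self N C w a
    linarith

end ChebGH

namespace ChebGH

lemma pair_id {N : ℕ} {a b : Option (Fin N)} {i : Fin N} (hab : a ≠ b)
    (h : bE N a b = (i : ℕ)) :
    (a = none ∧ b = some i) ∨ (a = some i ∧ b = none) := by
  have hi : (i : ℕ) < N := i.isLt
  cases a with
  | none =>
    cases b with
    | none => exact absurd rfl hab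
    | some k =>
      left
      refine ⟨rfl, ?_⟩
      have : (k : ℕ) = (i : ℕ) := h
      exact congrArg some (Fin.ext this)
  | some k =>
    cases b with
    | none =>
      right
      refine ⟨?_, rfl⟩
      have : (k : ℕ) = (i : ℕ) := h
      exact congrArg some (Fin.ext this)
    | some l =>
      exfalso
      have : N + min (k : ℕ) (l : ℕ) + N * max (k : ℕ) (l : ℕ) = (i : ℕ) := h
      omega

lemma ghDist_ge (N : ℕ) (C : ℝ) (v w : Fin N → ℝ) (i : Fin N) :
    |cl C (v i) - cl C (w i)| ≤ ghDist (Sp N C v) (Sp N C w) := by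
  set H := ghDist (Sp N C v) (Sp N C w) with hHdef
  have hH0 : 0 ≤ H := dist_nonneg
  have hQ := Q_nonneg C
  rcases eq_or_lt_of_le hQ with hQ0 | hQpos
  · have h1 := abs_cl_le C (v i)
    have h2 := abs_cl_le C (w i)
    rw [← hQ0] at h1 h2
    calc |cl C (v i) - cl C (w i)| ≤ |cl C (v i)| + |cl C (w i)| := abs_sub _ _
      _ ≤ 0 := by linarith
      _ ≤ H := hH0
  -- now 0 < Q C
  have hH2Q : H ≤ 2 * Q C := by
    apply ghDist_le N C v w (2 * Q C) (by linarith)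
    intro j
    calc |cl C (v j) - cl C (w j)| ≤ |cl C (v j)| + |cl C (w j)| := abs_sub _ _
      _ ≤ 2 * Q C := by linarith [abs_cl_le C (v j), abs_cl_le C (w j)]
  by_contra hcon
  push_neg at hcon
  set X := Sp N C v
  set Y := Sp N C w
  set f := optimalGHInjl X Y with hfdef
  set g := optimalGHInjr X Y with hgdef
  have hf : Isometry f := isometry_optimalGHInjl X Y
  have hg : Isometry g := isometry_optimalGHInjr X Y
  have hH : hausdorffDist (range f) (range g) = H := hausdorffDist_optimal (X := X) (Y := Y)
  have hcf : IsCompact (range f) := isCompact_range hf.continuous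
  have hcg : IsCompact (range g) := isCompact_range hg.continuous
  have fin : EMetric.hausdorffEdist (range f) (range g) ≠ ⊤ :=
    hausdorffEdist_ne_top_of_nonempty_of_bounded (range_nonempty f) (range_nonempty g)
      hcf.isBounded hcg.isBounded
  have hex : ∀ u : X, ∃ p : Y, dist (f u) (g p) ≤ H := by
    intro u
    have h1 : infDist (f u) (range g) ≤ H := by
      rw [← hH]
      exact infDist_le_hausdorffDist_of_mem (mem_range_self u) fin
    obtain ⟨z, hz, hz2⟩ := hcg.exists_infDist_eq_dist (range_nonempty g) (f u)
    obtain ⟨p, rfl⟩ := hz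
    exact ⟨p, by rw [← hz2]; exact h1⟩
  choose Φ hΦ using hex
  have transfer : ∀ u u' : X, |dist u u' - dist (Φ u) (Φ u')| ≤ 2 * H := by
    intro u u'
    rw [← hf.dist_eq u u', ← hg.dist_eq (Φ u) (Φ u')]
    rw [abs_le]
    have t1 : dist (f u) (f u') ≤ dist (f u) (g (Φ u)) + dist (g (Φ u)) (g (Φ u'))
        + dist (g (Φ u')) (f u') := dist_triangle4 _ _ _ _
    have t2 : dist (g (Φ u)) (g (Φ u')) ≤ dist (g (Φ u)) (f u) + dist (f u) (f u')
        + dist (f u') (g (Φ u')) := dist_triangle4 _ _ _ _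
    have c1 : dist (g (Φ u')) (f u') = dist (f u') (g (Φ u')) := dist_comm _ _
    have c2 : dist (g (Φ u)) (f u) = dist (f u) (g (Φ u)) := dist_comm _ _
    constructor <;> [skip; skip] <;>
      · have := hΦ u
        have := hΦ u'
        linarith
  -- specialize to none and some i
  set a := Φ (show X from (none : Option (Fin N))) with hadef
  set b := Φ (show X from (some i : Option (Fin N))) with hbdef
  have htrans := transfer (show X from (none : Option (Fin N)))
    (show X from (some i : Option (Fin N)))
  rw [Sp_dist, Sp_dist] at htrans
  have hne : (none : Option (Fin N)) ≠ some i := by simp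
  have hS1 : (1:ℝ) ≤ S C := S_pos C
  have hS0 : (0:ℝ) ≤ S C := by linarith
  -- a ≠ b
  have hab : (a : Option (Fin N)) ≠ b := by
    intro hEq
    have h0 : dd N C w a b = 0 := by rw [hEq]; exact dd_self N C w b
    rw [h0] at htrans
    have h1 := dd_lb N C v hne
    have hNn : (0:ℝ) ≤ (N:ℝ) + N * N := by positivity
    have h3 : (0:ℝ) ≤ S C * ((N:ℝ) + N * N) := mul_nonneg hS0 hNn
    rw [abs_le] at htrans
    unfold L at h1
    linarith [htrans.2]
  have hvdd : dd N C v (none : Option (Fin N)) (some i)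
      = L N C + S C * (i : ℕ) + 2 * cl C (v i) := by
    rw [dd_eq N C v hne]
    rfl
  have hwdd : dd N C w a b = L N C + S C * bE N a b + pv N C w a b := dd_eq N C w hab
  rw [hvdd, hwdd] at htrans
  -- base multiplier must match
  have hbE : bE N a b = (i : ℕ) := by
    by_contra hbe
    have hpw := abs_pv_le N C w a b
    have hcl := abs_cl_le C (v i)
    have hsep : (1 : ℝ) ≤ |(i : ℕ) - (bE N a b : ℝ)| := by
      rcases Nat.lt_or_ge (bE N a b) (i : ℕ) with hlt | hge
      · have : (bE N a b : ℝ) + 1 ≤ (i : ℕ) := by exact_mod_cast hlt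
        rw [abs_of_nonneg (by linarith)]
        linarith
      · have hgt : (i : ℕ) < bE N a b := lt_of_le_of_ne hge (fun hh => hbe hh.symm)
        have : ((i : ℕ) : ℝ) + 1 ≤ (bE N a b : ℝ) := by exact_mod_cast hgt
        rw [abs_of_nonpos (by linarith)]
        linarith
    have key : S C * |(i : ℕ) - (bE N a b : ℝ)| ≤ 8 * Q C := by
      have expand : L N C + S C * (i : ℕ) + 2 * cl C (v i)
          - (L N C + S C * bE N a b + pv N C w a b)
          = S C * ((i : ℕ) - (bE N a b : ℝ)) + (2 * cl C (v i) - pv N C w a b) := by ring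
      rw [expand] at htrans
      have h1 : |S C * ((i : ℕ) - (bE N a b : ℝ))|
          ≤ |S C * ((i : ℕ) - (bE N a b : ℝ)) + (2 * cl C (v i) - pv N C w a b)|
            + |2 * cl C (v i) - pv N C w a b| := by
        have := abs_add_le (S C * ((i : ℕ) - (bE N a b : ℝ)) + (2 * cl C (v i) - pv N C w a b))
          (-(2 * cl C (v i) - pv N C w a b))
        simp only [add_neg_cancel_right, abs_neg] at this
        exact this
      have h2 : |2 * cl C (v i) - pv N C w a b| ≤ 4 * Q C := by
        calc |2 * cl C (v i) - pv N C w a b| ≤ |2 * cl C (v i)| + |pv N C w a b| := abs_sub _ _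
          _ ≤ 4 * Q C := by
            rw [abs_mul, abs_of_nonneg (by norm_num : (0:ℝ) ≤ 2)]
            linarith [hpw, hcl]
      rw [abs_mul, abs_of_nonneg hS0] at h1
      linarith [htrans, h2, hH2Q]
    have : S C ≤ 8 * Q C := by
      calc S C = S C * 1 := (mul_one _).symm
        _ ≤ S C * |(i : ℕ) - (bE N a b : ℝ)| := by
          apply mul_le_mul_of_nonneg_left hsep hS0
        _ ≤ 8 * Q C := key
    unfold S at this
    linarith
  -- identify the pair
  rcases pair_id hab hbE with ⟨ha, hb⟩ | ⟨ha, hb⟩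
  · have hpv : pv N C w a b = 2 * cl C (w i) := by rw [ha, hb]; rfl
    rw [hbE, hpv] at htrans
    have : |2 * cl C (v i) - 2 * cl C (w i)| ≤ 2 * H := by
      have expand : L N C + S C * (i:ℕ) + 2 * cl C (v i)
          - (L N C + S C * (i:ℕ) + 2 * cl C (w i))
          = 2 * cl C (v i) - 2 * cl C (w i) := by ring
      rw [expand] at htrans
      exact htrans
    rw [show (2:ℝ) * cl C (v i) - 2 * cl C (w i) = 2 * (cl C (v i) - cl C (w i)) by ring,
      abs_mul, abs_of_nonneg (by norm_num : (0:ℝ) ≤ 2)] at this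
    have := hcon
    linarith
  · have hpv : pv N C w a b = 2 * cl C (w i) := by rw [ha, hb]; rfl
    rw [hbE, hpv] at htrans
    have : |2 * cl C (v i) - 2 * cl C (w i)| ≤ 2 * H := by
      have expand : L N C + S C * (i:ℕ) + 2 * cl C (v i)
          - (L N C + S C * (i:ℕ) + 2 * cl C (w i))
          = 2 * cl C (v i) - 2 * cl C (w i) := by ring
      rw [expand] at htrans
      exact htrans
    rw [show (2:ℝ) * cl C (v i) - 2 * cl C (w i) = 2 * (cl C (v i) - cl C (w i)) by ring,
      abs_mul, abs_of_nonneg (by norm_num : (0:ℝ) ≤ 2)] at this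
    linarith

end ChebGH

open ChebGH in
/-- A bounded subset of ℝ^N with the Chebyshev (sup) distance embeds isometrically
into the Gromov–Hausdorff space. On `Fin N → ℝ`, `dist x y = max_n |x n - y n|`. -/
theorem bounded_subset_chebyshev_isometric_embedding_GH {N : ℕ} (hN : 1 ≤ N)
    (A : Set (Fin N → ℝ)) (hA : Bornology.IsBounded A) :
    ∃ K : A → GromovHausdorff.GHSpace,
      ∀ x y : A, dist (K x) (K y) = dist (x : Fin N → ℝ) (y : Fin N → ℝ) := by
  obtain ⟨R, hR⟩ := hA.subset_closedBall 0
  set C := max R 0 with hCdef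
  have hC0 : (0:ℝ) ≤ C := le_max_right _ _
  have hbound : ∀ x : A, ∀ i : Fin N, |(x : Fin N → ℝ) i| ≤ C := by
    intro x i
    have hx : (x : Fin N → ℝ) ∈ Metric.closedBall 0 R := hR x.2
    rw [Metric.mem_closedBall] at hx
    have h1 : dist ((x : Fin N → ℝ) i) ((0 : Fin N → ℝ) i) ≤ dist (x : Fin N → ℝ) 0 :=
      dist_le_pi_dist _ _ i
    have h2 : dist ((x : Fin N → ℝ) i) ((0 : Fin N → ℝ) i) = |(x : Fin N → ℝ) i| := by
      simp [Real.dist_eq]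
    rw [h2] at h1
    calc |(x : Fin N → ℝ) i| ≤ R := le_trans h1 hx
      _ ≤ C := le_max_left _ _
  refine ⟨fun x => GromovHausdorff.toGHSpace (Sp N C (x : Fin N → ℝ)), ?_⟩
  intro x y
  have hgh : dist (GromovHausdorff.toGHSpace (Sp N C (x : Fin N → ℝ)))
      (GromovHausdorff.toGHSpace (Sp N C (y : Fin N → ℝ)))
      = GromovHausdorff.ghDist (Sp N C (x : Fin N → ℝ)) (Sp N C (y : Fin N → ℝ)) := rfl
  rw [hgh]
  set r := dist (x : Fin N → ℝ) (y : Fin N → ℝ) with hrdef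
  have hr0 : 0 ≤ r := dist_nonneg
  rcases eq_or_lt_of_le hr0 with hr | hr
  · -- r = 0 : x = y
    have hxy : (x : Fin N → ℝ) = (y : Fin N → ℝ) := by
      rw [← dist_eq_zero]
      exact hr.symm
    rw [hxy, ← hr]
    exact dist_self _
  · apply le_antisymm
    · apply ghDist_le N C _ _ r hr
      intro i
      rw [cl_eq_self C hC0 (hbound x i), cl_eq_self C hC0 (hbound y i)]
      have h1 : dist ((x : Fin N → ℝ) i) ((y : Fin N → ℝ) i) ≤ r := dist_le_pi_dist _ _ i
      rwa [Real.dist_eq] at h1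
    · rw [hrdef]
      rw [show GromovHausdorff.ghDist (Sp N C (x : Fin N → ℝ)) (Sp N C (y : Fin N → ℝ))
        = dist (GromovHausdorff.toGHSpace (Sp N C (x : Fin N → ℝ)))
          (GromovHausdorff.toGHSpace (Sp N C (y : Fin N → ℝ))) from rfl]
      apply (dist_pi_le_iff dist_nonneg).2
      intro i
      have h1 := ghDist_ge N C (x : Fin N → ℝ) (y : Fin N → ℝ) i
      rw [cl_eq_self C hC0 (hbound x i), cl_eq_self C hC0 (hbound y i)] at h1
      rw [Real.dist_eq]
      exact h1
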